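/- Let V = ℕ and let G be the class of all symmetric Boolean functions g : V × V → {0,1} that are edge indicators of 1-regular simple graphs on V, i.e., g(v,v) = 0 for all v, and for every v ∈ V there is exactly one u ∈ V with g(v,u) = 1. Then: (i) gVC(G) = 1, i.e., for every v ∈ V the class G_v = {u ↦ g(v,u) : g ∈ G} of Boolean functions on V has VC dimension 1; and (ii) G, viewed as a family of Boolean functions on V × V, has infinite VC dimension: for every n there exist n pairwise-disjoint pairs (a₁,b₁),…,(a_n,b_n) of distinct vertices such that the set {(a₁,b₁),…,(a_n,b_n)} ⊆ V × V is shattered by G. -/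

import Mathlib

open scoped BigOperators

namespace GraphDisc

/-- A `k`-distinguisher is symmetric: invariant under all permutations of arguments. -/
def IsSymmetric {V : Type*} {k : ℕ} (g : (Fin k → V) → Bool) : Prop :=
  ∀ (σ : Equiv.Perm (Fin k)) (w : Fin k → V), g (w ∘ σ) = g w

/-- A `k`-distinguishing class: a family of symmetric Boolean `k`-ary functions. -/
def IsDistinguishingClass {V : Type*} {k : ℕ} (G : Set ((Fin k → V) → Bool)) : Prop :=
  ∀ g ∈ G, IsSymmetric g

/-- `p` is a probability distribution on `V` (as a mass function). -/
def IsDist {V : Type*} (p : V → ℝ) : Prop := (∀ v, 0 ≤ p v) ∧ HasSum p 1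

/-- `L_P(g)`: expected value of `g` on a `k`-tuple of i.i.d. samples from `p`. -/
noncomputable def LP {V : Type*} {k : ℕ} (p : V → ℝ) (g : (Fin k → V) → Bool) : ℝ :=
  ∑' w : Fin k → V, (∏ i, p (w i)) * (if g w then 1 else 0)

/-- `L_S(g)`: empirical frequency of `g` on all `k`-tuples from the sample `S`. -/
noncomputable def LS {V : Type*} {k m : ℕ} (S : Fin m → V) (g : (Fin k → V) → Bool) : ℝ :=
  (∑ t : Fin k → Fin m, if g (S ∘ t) then (1 : ℝ) else 0) / (m : ℝ) ^ k

/-- Probability of an event `E` under an i.i.d. sample of size `m` from `p`. -/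
noncomputable def Prob {V : Type*} (p : V → ℝ) {m : ℕ} (E : Set (Fin m → V)) : ℝ :=
  ∑' S : Fin m → V, E.indicator (fun S => ∏ i, p (S i)) S

/-- Probability of an event `E` under two independent i.i.d. samples of size `m`. -/
noncomputable def Prob2 {V : Type*} (p₁ p₂ : V → ℝ) {m : ℕ}
    (E : Set ((Fin m → V) × (Fin m → V))) : ℝ :=
  ∑' S : (Fin m → V) × (Fin m → V),
    E.indicator (fun S => (∏ i, p₁ (S.1 i)) * ∏ i, p₂ (S.2 i)) S

/-- IPM distance induced by a class of `k`-ary distinguishers. -/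
noncomputable def IPM {V : Type*} {k : ℕ} (G : Set ((Fin k → V) → Bool))
    (p₁ p₂ : V → ℝ) : ℝ :=
  ⨆ g ∈ G, |LP p₁ g - LP p₂ g|

/-- `L_P(d)` for a unary Boolean function `d`. -/
noncomputable def LP1 {V : Type*} (p : V → ℝ) (d : V → Bool) : ℝ :=
  ∑' v : V, p v * (if d v then 1 else 0)

/-- IPM distance for a family of unary Boolean functions. -/
noncomputable def IPM1 {V : Type*} (D : Set (V → Bool)) (p₁ p₂ : V → ℝ) : ℝ :=
  ⨆ d ∈ D, |LP1 p₁ d - LP1 p₂ d|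

/-- `L_P(g)` for a binary (curried) Boolean function `g`. -/
noncomputable def LP2 {V : Type*} (p : V → ℝ) (g : V → V → Bool) : ℝ :=
  ∑' w : V × V, (p w.1 * p w.2) * (if g w.1 w.2 then 1 else 0)

/-- `D` shatters the finite set `T`: every Boolean pattern on `T` is realized in `D`. -/
def Shatters {X : Type*} (D : Set (X → Bool)) (T : Finset X) : Prop :=
  ∀ f : X → Bool, ∃ d ∈ D, ∀ x ∈ T, d x = f x

/-- The VC dimension of a family of Boolean functions. -/
noncomputable def vcDim {X : Type*} (D : Set (X → Bool)) : ℕ∞ :=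
  ⨆ T ∈ {T : Finset X | Shatters D T}, (T.card : ℕ∞)

/-- Fixing the first argument of a `(k+1)`-ary function to `v`. -/
def proj {V : Type*} {k : ℕ} (v : V) (g : (Fin (k + 1) → V) → Bool) :
    (Fin k → V) → Bool := fun u => g (Fin.cons v u)

/-- The graph VC dimension, defined inductively: for `k = 1` it is the usual VC
dimension; for `k > 1` it is the supremum over `v` of the graph VC dimension of the
projected class `G_v`. -/
noncomputable def gvcDim {V : Type*} : (k : ℕ) → Set ((Fin k → V) → Bool) → ℕ∞
  | 0, G => vcDim G
  | 1, G => vcDim G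
  | (k + 2), G => ⨆ v : V, gvcDim (k + 1) (proj v '' G)

open Classical in
/-- Mixture `q·δ_v + (1−q)·p`. -/
noncomputable def mix {V : Type*} (q : ℝ) (v : V) (p : V → ℝ) : V → ℝ :=
  fun u => q * (if u = v then 1 else 0) + (1 - q) * p u

/-- The class of majority-vote threshold functions over `m`-tuples from `D`. -/
noncomputable def thresholdClass {V : Type*} (D : Set (V → Bool)) (m : ℕ) :
    Set (V → Bool) :=
  {h | ∃ d : Fin m → (V → Bool), (∀ i, d i ∈ D) ∧
        h = fun v => decide ((0 : ℝ) ≤ ∑ i, (2 * (if d i v then (1 : ℝ) else 0) - 1))}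


/-- The class of edge indicators of 1-regular simple graphs on `ℕ`. -/
def oneRegular : Set (ℕ → ℕ → Bool) :=
  {g | (∀ x y, g x y = g y x) ∧ (∀ v, g v v = false) ∧ ∀ v, ∃! u, g v u = true}

/-! ### Auxiliary machinery for `stmt18` -/

/-- The standard perfect matching on `ℕ`: `2k ↔ 2k+1`. -/
def std (k : ℕ) : ℕ := if k % 2 = 0 then k + 1 else k - 1

lemma std_invol (k : ℕ) : std (std k) = k := by
  unfold std; split_ifs <;> omega

lemma std_ne (k : ℕ) : std k ≠ k := by
  unfold std; split_ifs <;> omega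

lemma std_inj {a b : ℕ} (h : std a = std b) : a = b := by
  unfold std at h; split_ifs at h <;> omega

/-- The matching obtained from `std` by rewiring so that `v ↔ w`. -/
def swapMatch (v w : ℕ) (k : ℕ) : ℕ :=
  if k = v then w else if k = w then v else
  if k = std v then std w else if k = std w then std v else std k

lemma sm_v (v w : ℕ) : swapMatch v w v = w := by simp [swapMatch]

lemma sm_w (v w : ℕ) (h : v ≠ w) : swapMatch v w w = v := by
  simp [swapMatch, Ne.symm h]

lemma sm_sv (v w : ℕ) (h : v ≠ w) : swapMatch v w (std v) = std w := by
  by_cases hw : std v = w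
  · rw [hw, sm_w v w h, ← hw, std_invol]
  · have h1 : std v ≠ v := std_ne v
    simp [swapMatch, h1, hw]

lemma sm_sw (v w : ℕ) (h : v ≠ w) : swapMatch v w (std w) = std v := by
  by_cases hv : std w = v
  · rw [hv, sm_v v w, ← hv, std_invol]
  · have h1 : std w ≠ w := std_ne w
    have h2 : std w ≠ std v := fun hh => h (std_inj hh).symm
    simp [swapMatch, h1, hv, h2]

lemma sm_other (v w k : ℕ) (h1 : k ≠ v) (h2 : k ≠ w) (h3 : k ≠ std v)
    (h4 : k ≠ std w) : swapMatch v w k = std k := by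
  simp [swapMatch, h1, h2, h3, h4]

lemma swapMatch_invol (v w : ℕ) (h : v ≠ w) :
    Function.Involutive (swapMatch v w) := by
  intro k
  by_cases h1 : k = v
  · rw [h1, sm_v, sm_w v w h]
  by_cases h2 : k = w
  · rw [h2, sm_w v w h, sm_v]
  by_cases h3 : k = std v
  · rw [h3, sm_sv v w h, sm_sw v w h]
  by_cases h4 : k = std w
  · rw [h4, sm_sw v w h, sm_sv v w h]
  · rw [sm_other v w k h1 h2 h3 h4]
    have k1 : std k ≠ v := fun hh => h3 (by rw [← hh, std_invol])
    have k2 : std k ≠ w := fun hh => h4 (by rw [← hh, std_invol])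
    have k3 : std k ≠ std v := fun hh => h1 (std_inj hh)
    have k4 : std k ≠ std w := fun hh => h2 (std_inj hh)
    rw [sm_other v w (std k) k1 k2 k3 k4, std_invol]

lemma swapMatch_ne (v w : ℕ) (h : v ≠ w) : ∀ k, swapMatch v w k ≠ k := by
  intro k
  by_cases h1 : k = v
  · rw [h1, sm_v]; exact Ne.symm h
  by_cases h2 : k = w
  · rw [h2, sm_w v w h]; exact h
  by_cases h3 : k = std v
  · rw [h3, sm_sv v w h]; exact fun hh => h (std_inj hh).symm
  by_cases h4 : k = std w
  · rw [h4, sm_sw v w h]; exact fun hh => h (std_inj hh)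
  · rw [sm_other v w k h1 h2 h3 h4]; exact std_ne k

/-- The edge-indicator of an involution. -/
def gOf (f : ℕ → ℕ) : ℕ → ℕ → Bool := fun v u => decide (f v = u)

lemma gOf_mem {f : ℕ → ℕ} (hinv : Function.Involutive f)
    (hfix : ∀ k, f k ≠ k) : gOf f ∈ oneRegular := by
  refine ⟨?_, ?_, ?_⟩
  · intro x y
    simp only [gOf, decide_eq_decide]
    constructor
    · intro hh; rw [← hh, hinv]
    · intro hh; rw [← hh, hinv]
  · intro v; simp [gOf, hfix v]
  · intro v
    refine ⟨f v, by simp [gOf], fun u hu => ?_⟩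
    simp only [gOf, decide_eq_true_eq] at hu
    exact hu.symm

/-- Block matching: in block `{4i,…,4i+3}`, match `(4i,4i+1),(4i+2,4i+3)` if `s i`,
else `(4i,4i+2),(4i+1,4i+3)`. -/
def bm (s : ℕ → Bool) (k : ℕ) : ℕ :=
  if s (k / 4) then (if k % 2 = 0 then k + 1 else k - 1)
  else (if k % 4 < 2 then k + 2 else k - 2)

lemma bm_eq (s : ℕ → Bool) (k : ℕ) : bm s k =
    if s (k / 4) then (if k % 2 = 0 then k + 1 else k - 1)
    else (if k % 4 < 2 then k + 2 else k - 2) := rfl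

lemma bm_div (s : ℕ → Bool) (k : ℕ) : bm s k / 4 = k / 4 := by
  unfold bm; split_ifs <;> omega

lemma bm_invol (s : ℕ → Bool) : Function.Involutive (bm s) := by
  intro k
  have hd : bm s k / 4 = k / 4 := bm_div s k
  cases hs : s (k / 4)
  · have h1 : bm s k = if k % 4 < 2 then k + 2 else k - 2 := by
      rw [bm_eq, if_neg (by simp [hs])]
    rw [bm_eq s (bm s k), hd, if_neg (by simp [hs]), h1]
    split_ifs <;> omega
  · have h1 : bm s k = if k % 2 = 0 then k + 1 else k - 1 := by
      rw [bm_eq, if_pos hs]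
    rw [bm_eq s (bm s k), hd, if_pos hs, h1]
    split_ifs <;> omega

lemma bm_ne (s : ℕ → Bool) : ∀ k, bm s k ≠ k := by
  intro k; unfold bm; split_ifs <;> omega

lemma bm_val (s : ℕ → Bool) (i : ℕ) :
    bm s (4 * i) = if s i then 4 * i + 1 else 4 * i + 2 := by
  rw [bm_eq]
  have h1 : 4 * i / 4 = i := by omega
  have h2 : 4 * i % 2 = 0 := by omega
  have h3 : 4 * i % 4 < 2 := by omega
  rw [h1, if_pos h2, if_pos h3]

lemma shatter_pairs (n : ℕ) :
    Shatters ((fun (g : ℕ → ℕ → Bool) (w : ℕ × ℕ) => g w.1 w.2) '' oneRegular)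
      (Finset.image (fun i : Fin n => (4 * (i : ℕ), 4 * (i : ℕ) + 1))
        Finset.univ) := by
  intro f
  classical
  set s : ℕ → Bool := fun i => f (4 * i, 4 * i + 1) with hsdef
  refine ⟨fun w => gOf (bm s) w.1 w.2,
    ⟨gOf (bm s), gOf_mem (bm_invol s) (bm_ne s), rfl⟩, ?_⟩
  intro x hx
  simp only [Finset.mem_image, Finset.mem_univ, true_and] at hx
  obtain ⟨i, rfl⟩ := hx
  show gOf (bm s) (4 * (i : ℕ)) (4 * (i : ℕ) + 1) = f (4 * (i : ℕ), 4 * (i : ℕ) + 1)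
  have : f (4 * (i : ℕ), 4 * (i : ℕ) + 1) = s (i : ℕ) := rfl
  rw [this, gOf]
  rw [bm_val]
  cases hsi : s (i : ℕ) <;> simp [hsi]

lemma pairs_inj (n : ℕ) :
    Function.Injective (fun i : Fin n => (4 * (i : ℕ), 4 * (i : ℕ) + 1)) := by
  intro i j hij
  simp only [Prod.mk.injEq] at hij
  exact Fin.ext (by omega)

/-- 1-regular graphs have graph VC dimension 1 but infinite VC dimension. -/
theorem stmt18 :
    (∀ v : ℕ, vcDim {d : ℕ → Bool | ∃ g ∈ oneRegular, d = fun u => g v u} = 1) ∧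
    vcDim ((fun (g : ℕ → ℕ → Bool) (w : ℕ × ℕ) => g w.1 w.2) '' oneRegular) = ⊤ ∧
    ∀ n : ℕ, ∃ a b : Fin n → ℕ,
      (∀ i, a i ≠ b i) ∧
      (∀ i j, i ≠ j → a i ≠ a j ∧ a i ≠ b j ∧ b i ≠ a j ∧ b i ≠ b j) ∧
      Shatters ((fun (g : ℕ → ℕ → Bool) (w : ℕ × ℕ) => g w.1 w.2) '' oneRegular)
        (Finset.image (fun i => (a i, b i)) Finset.univ) := by
  have key : ∀ n : ℕ, (n : ℕ∞) ≤
      vcDim ((fun (g : ℕ → ℕ → Bool) (w : ℕ × ℕ) => g w.1 w.2) '' oneRegular) := by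
    intro n
    have hmem : (Finset.image (fun i : Fin n => (4 * (i : ℕ), 4 * (i : ℕ) + 1))
        Finset.univ) ∈ {T : Finset (ℕ × ℕ) |
          Shatters ((fun (g : ℕ → ℕ → Bool) (w : ℕ × ℕ) => g w.1 w.2) '' oneRegular) T} :=
      shatter_pairs n
    have hcard : (Finset.image (fun i : Fin n => (4 * (i : ℕ), 4 * (i : ℕ) + 1))
        Finset.univ).card = n := by
      rw [Finset.card_image_of_injective _ (pairs_inj n), Finset.card_univ,
        Fintype.card_fin]
    have hle := le_biSup (fun T : Finset (ℕ × ℕ) => (T.card : ℕ∞)) hmem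
    simpa [hcard, vcDim] using hle
  refine ⟨?_, ?_, ?_⟩
  · -- graph VC dimension is 1
    intro v
    set D : Set (ℕ → Bool) := {d : ℕ → Bool | ∃ g ∈ oneRegular, d = fun u => g v u}
      with hD
    have hone : ∀ d ∈ D, ∀ x y, d x = true → d y = true → x = y := by
      intro d hd x y hx hy
      obtain ⟨g, hg, rfl⟩ := hd
      obtain ⟨u, -, huniq⟩ := hg.2.2 v
      rw [huniq x hx, huniq y hy]
    apply le_antisymm
    · refine iSup₂_le fun T hT => ?_
      by_contra hc
      push_neg at hc
      have h2 : 1 < T.card := by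
        by_contra hh
        push_neg at hh
        exact absurd (by exact_mod_cast hh : (T.card : ℕ∞) ≤ 1) (not_le.mpr hc)
      obtain ⟨x, hx, y, hy, hxy⟩ := Finset.one_lt_card.mp h2
      obtain ⟨d, hd, hval⟩ := hT (fun _ => true)
      exact hxy (hone d hd x y (hval x hx) (hval y hy))
    · have hshat : Shatters D {v + 1} := by
        intro f
        by_cases hf : f (v + 1) = true
        · refine ⟨fun u => gOf (swapMatch v (v + 1)) v u,
            ⟨gOf (swapMatch v (v + 1)),
              gOf_mem (swapMatch_invol v (v + 1) (by omega))
                (swapMatch_ne v (v + 1) (by omega)), rfl⟩, ?_⟩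
          intro x hx
          simp only [Finset.mem_singleton] at hx
          subst hx
          rw [hf]
          show decide (swapMatch v (v + 1) v = v + 1) = true
          rw [sm_v]; simp
        · have hf' : f (v + 1) = false := by simpa using hf
          refine ⟨fun u => gOf (swapMatch v (v + 2)) v u,
            ⟨gOf (swapMatch v (v + 2)),
              gOf_mem (swapMatch_invol v (v + 2) (by omega))
                (swapMatch_ne v (v + 2) (by omega)), rfl⟩, ?_⟩
          intro x hx
          simp only [Finset.mem_singleton] at hx
          subst hx
          rw [hf']
          show decide (swapMatch v (v + 2) v = v + 1) = false
          rw [sm_v]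
          exact decide_eq_false (by omega)
      have hmem : ({v + 1} : Finset ℕ) ∈ {T : Finset ℕ | Shatters D T} := hshat
      have hle := le_biSup (fun T : Finset ℕ => (T.card : ℕ∞)) hmem
      simpa [vcDim] using hle
  · -- infinite VC dimension
    by_contra hne
    obtain ⟨m, hm⟩ : ∃ m : ℕ, vcDim ((fun (g : ℕ → ℕ → Bool) (w : ℕ × ℕ) =>
        g w.1 w.2) '' oneRegular) = (m : ℕ∞) :=
      ⟨_, (ENat.coe_toNat hne).symm⟩
    have h1 := key (m + 1)
    rw [hm] at h1
    have h2 : m + 1 ≤ m := by exact_mod_cast h1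
    omega
  · -- explicit disjoint shattered pairs
    intro n
    refine ⟨fun i => 4 * (i : ℕ), fun i => 4 * (i : ℕ) + 1,
      fun i => show 4 * (i : ℕ) ≠ 4 * (i : ℕ) + 1 by omega, ?_, shatter_pairs n⟩
    intro i j hij
    have hij' : (i : ℕ) ≠ (j : ℕ) := fun hh => hij (Fin.ext hh)
    exact ⟨show 4 * (i : ℕ) ≠ 4 * (j : ℕ) by omega,
      show 4 * (i : ℕ) ≠ 4 * (j : ℕ) + 1 by omega,
      show 4 * (i : ℕ) + 1 ≠ 4 * (j : ℕ) by omega,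
      show 4 * (i : ℕ) + 1 ≠ 4 * (j : ℕ) + 1 by omega⟩

end GraphDisc
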